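/- Let 2n points lie on a circle, ordered counterclockwise and labeled 1,…,2n, and let r_{ps} denote the distance between points p and s. For any α > 0, the sum of 1/r_{ps}^α over all pairs p < s with p ≡ s (mod 2) is strictly less than the sum of 1/r_{ps}^α over all pairs p < s with p ≢ s (mod 2). (Case n = 3: the cyclic hexagon inequality 1/r₁₃^α + 1/r₁₅^α + 1/r₂₄^α + 1/r₂₆^α + 1/r₃₅^α + 1/r₄₆^α < sum over the nine pairs of opposite parity.) -/

import Mathlib

open Finset Real

/-- Convexity of `d ↦ exp (-α * log (2R sin (d/2)))` on `(0, 2π)`. -/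
lemma aux_convexOn (α Rad : ℝ) (hα : 0 < α) (hRad : 0 < Rad) :
    ConvexOn ℝ (Set.Ioo 0 (2 * Real.pi))
      (fun d => Real.exp (-α * Real.log (2 * Rad * Real.sin (d / 2)))) := by
  have hπ := Real.pi_pos
  have hs : ∀ z : ℝ, z ∈ Set.Ioo (0:ℝ) (2 * Real.pi) → 0 < Real.sin (z / 2) := fun z hz =>
    Real.sin_pos_of_pos_of_lt_pi (by linarith [hz.1]) (by linarith [hz.2])
  refine ⟨convex_Ioo 0 (2 * Real.pi), ?_⟩
  rintro x hx y hy a b ha hb hab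
  have hmem : a • x + b • y ∈ Set.Ioo (0:ℝ) (2 * Real.pi) :=
    (convex_Ioo (0:ℝ) (2 * Real.pi)) hx hy ha hb hab
  simp only [smul_eq_mul] at *
  have hsx := hs x hx
  have hsy := hs y hy
  have hsm := hs _ hmem
  -- concavity of sin
  have hsin : a * Real.sin (x / 2) + b * Real.sin (y / 2) ≤ Real.sin ((a * x + b * y) / 2) := by
    have h1 : x / 2 ∈ Set.Icc (0:ℝ) Real.pi := ⟨by linarith [hx.1], by linarith [hx.2]⟩
    have h2 : y / 2 ∈ Set.Icc (0:ℝ) Real.pi := ⟨by linarith [hy.1], by linarith [hy.2]⟩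
    have := strictConcaveOn_sin_Icc.concaveOn.2 h1 h2 ha hb hab
    simp only [smul_eq_mul] at this
    have e : a * (x / 2) + b * (y / 2) = (a * x + b * y) / 2 := by ring
    rwa [e] at this
  -- concavity of log
  have hlog : a * Real.log (2 * Rad * Real.sin (x / 2)) + b * Real.log (2 * Rad * Real.sin (y / 2))
      ≤ Real.log (2 * Rad * Real.sin ((a * x + b * y) / 2)) := by
    have c1 : (0:ℝ) < 2 * Rad * Real.sin (x / 2) := by positivity
    have c2 : (0:ℝ) < 2 * Rad * Real.sin (y / 2) := by positivity
    have hlc := strictConcaveOn_log_Ioi.concaveOn.2 (Set.mem_Ioi.2 c1) (Set.mem_Ioi.2 c2) ha hb hab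
    simp only [smul_eq_mul] at hlc
    refine hlc.trans ?_
    have hor : 0 < a ∨ 0 < b := by by_contra hcon; push_neg at hcon; linarith [hcon.1, hcon.2]
    have hposc : 0 < a * (2 * Rad * Real.sin (x / 2)) + b * (2 * Rad * Real.sin (y / 2)) := by
      rcases hor with h | h
      · nlinarith [mul_pos h c1, mul_nonneg hb c2.le]
      · nlinarith [mul_pos h c2, mul_nonneg ha c1.le]
    have hle : a * (2 * Rad * Real.sin (x / 2)) + b * (2 * Rad * Real.sin (y / 2))
        ≤ 2 * Rad * Real.sin ((a * x + b * y) / 2) := by nlinarith [hsin]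
    exact Real.log_le_log hposc hle
  -- convexity of exp
  have hexp : Real.exp (a * (-α * Real.log (2 * Rad * Real.sin (x / 2)))
        + b * (-α * Real.log (2 * Rad * Real.sin (y / 2))))
      ≤ a * Real.exp (-α * Real.log (2 * Rad * Real.sin (x / 2)))
        + b * Real.exp (-α * Real.log (2 * Rad * Real.sin (y / 2))) := by
    have := convexOn_exp.2 (Set.mem_univ (-α * Real.log (2 * Rad * Real.sin (x / 2))))
      (Set.mem_univ (-α * Real.log (2 * Rad * Real.sin (y / 2)))) ha hb hab
    simpa using this
  refine le_trans ?_ hexp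
  apply Real.exp_le_exp.2
  have hmul := mul_le_mul_of_nonneg_left hlog hα.le
  nlinarith [hmul]

/-- The four-point (Wright convexity) inequality for the chord-power function. -/
lemma fourpoint (α Rad : ℝ) (hα : 0 < α) (hRad : 0 < Rad) {u x y : ℝ}
    (hu : 0 < u) (hx : 0 ≤ x) (hy : 0 ≤ y) (hub : u + x + y < 2 * Real.pi) :
    (2 * Rad * Real.sin ((u + y) / 2)) ^ (-α) - (2 * Rad * Real.sin (u / 2)) ^ (-α)
      ≤ (2 * Rad * Real.sin ((u + x + y) / 2)) ^ (-α)
        - (2 * Rad * Real.sin ((u + x) / 2)) ^ (-α) := by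
  have hπ := Real.pi_pos
  have hfF : ∀ d : ℝ, 0 < d → d < 2 * Real.pi → (2 * Rad * Real.sin (d / 2)) ^ (-α)
      = Real.exp (-α * Real.log (2 * Rad * Real.sin (d / 2))) := by
    intro d h1 h2
    have hsd : 0 < Real.sin (d / 2) :=
      Real.sin_pos_of_pos_of_lt_pi (by linarith) (by linarith)
    rw [Real.rpow_def_of_pos (by positivity), mul_comm]
  rcases eq_or_lt_of_le (by linarith : (0:ℝ) ≤ x + y) with h0 | hxy
  · have hx0 : x = 0 := by linarith
    have hy0 : y = 0 := by linarith
    simp [hx0, hy0]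
  · have hCV := aux_convexOn α Rad hα hRad
    have hne : x + y ≠ 0 := ne_of_gt hxy
    set a : ℝ := y / (x + y) with haa
    set b : ℝ := x / (x + y) with hbb
    have ha : 0 ≤ a := by positivity
    have hb : 0 ≤ b := by positivity
    have hab : a + b = 1 := by
      rw [haa, hbb, ← add_div, add_comm]
      exact div_self hne
    have m1 : u ∈ Set.Ioo (0:ℝ) (2 * Real.pi) := ⟨hu, by linarith⟩
    have m2 : u + x + y ∈ Set.Ioo (0:ℝ) (2 * Real.pi) := ⟨by linarith, hub⟩
    have e1 : a * u + b * (u + x + y) = u + x := by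
      rw [haa, hbb]
      field_simp
      ring
    have e2 : b * u + a * (u + x + y) = u + y := by
      rw [haa, hbb]
      field_simp
      ring
    have h1 := hCV.2 m1 m2 ha hb hab
    have h2 := hCV.2 m1 m2 hb ha (by linarith)
    simp only [smul_eq_mul] at h1 h2
    rw [e1] at h1
    rw [e2] at h2
    rw [hfF u hu (by linarith), hfF (u + y) (by linarith) (by linarith),
      hfF (u + x) (by linarith) (by linarith), hfF (u + x + y) (by linarith) hub]
    set A := Real.exp (-α * Real.log (2 * Rad * Real.sin (u / 2)))
    set D := Real.exp (-α * Real.log (2 * Rad * Real.sin ((u + x + y) / 2)))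
    have expand : a * A + b * D + (b * A + a * D) = (a + b) * (A + D) := by ring
    rw [hab, one_mul] at expand
    linarith [h1, h2, expand]

lemma pairsum (M : ℕ) (g : ℕ → ℝ) :
    ∑ i ∈ Finset.range (2 * M + 2), g i
      = ∑ k ∈ Finset.range (M + 1), (g (2 * k) + g (2 * k + 1)) := by
  induction M with
  | zero => simp [Finset.sum_range_succ]
  | succ m ih =>
    rw [Finset.sum_range_succ (n := m + 1), ← ih,
      show 2 * (m + 1) + 2 = (2 * m + 2) + 1 + 1 by ring,
      Finset.sum_range_succ, Finset.sum_range_succ]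
    ring_nf

/-- Main induction: the signed sum over ordered pairs is negative. -/
lemma main_neg (f : ℝ → ℝ)
    (hpos : ∀ d : ℝ, 0 < d → d < 2 * Real.pi → 0 < f d)
    (hconv : ∀ u x y : ℝ, 0 < u → 0 ≤ x → 0 ≤ y → u + x + y < 2 * Real.pi →
      f (u + y) - f u ≤ f (u + x + y) - f (u + x)) :
    ∀ (m : ℕ) (θ : ℕ → ℝ), (∀ i j, i < j → j < 2 * m + 2 → θ i < θ j) →
      (∀ i, i < 2 * m + 2 → 0 ≤ θ i ∧ θ i < 2 * Real.pi) →
      (∑ j ∈ Finset.range (2 * m + 2), ∑ i ∈ Finset.range j,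
        (if i % 2 = j % 2 then (1:ℝ) else -1) * f (θ j - θ i)) < 0 := by
  intro m
  induction m with
  | zero =>
    intro θ hm hb
    have h01 : θ 0 < θ 1 := hm 0 1 (by omega) (by omega)
    have hb0 := hb 0 (by omega)
    have hb1 := hb 1 (by omega)
    have hf : 0 < f (θ 1 - θ 0) := hpos _ (by linarith) (by linarith [hb0.1, hb1.2])
    norm_num [Finset.sum_range_succ]
    linarith
  | succ m ih =>
    intro θ hm hb
    have hSN := ih θ (fun i j hij hj => hm i j hij (by omega)) (fun i hi => hb i (by omega))
    rw [show 2 * (m + 1) + 2 = (2 * m + 2) + 1 + 1 by ring, Finset.sum_range_succ,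
      Finset.sum_range_succ, Finset.sum_range_succ (n := 2 * m + 2)]
    have hyNN : 0 < θ (2 * m + 2 + 1) - θ (2 * m + 2) := by
      have := hm (2 * m + 2) (2 * m + 2 + 1) (by omega) (by omega); linarith
    have hfNN : 0 < f (θ (2 * m + 2 + 1) - θ (2 * m + 2)) := by
      refine hpos _ hyNN ?_
      have hA := (hb (2 * m + 2 + 1) (by omega)).2
      have hB := (hb (2 * m + 2) (by omega)).1
      linarith
    have hsgn : (if (2 * m + 2) % 2 = (2 * m + 2 + 1) % 2 then (1:ℝ) else -1) = -1 := by
      have hq : ¬ ((2 * m + 2) % 2 = (2 * m + 2 + 1) % 2) := by omega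
      rw [if_neg hq]
    have hpair :
        (∑ i ∈ Finset.range (2 * m + 2),
            (if i % 2 = (2 * m + 2) % 2 then (1:ℝ) else -1) * f (θ (2 * m + 2) - θ i))
        + (∑ i ∈ Finset.range (2 * m + 2),
            (if i % 2 = (2 * m + 2 + 1) % 2 then (1:ℝ) else -1) * f (θ (2 * m + 2 + 1) - θ i))
        ≤ 0 := by
      rw [← Finset.sum_add_distrib, pairsum m]
      apply Finset.sum_nonpos
      intro k hk
      have hk' : k < m + 1 := Finset.mem_range.1 hk
      have hu : 0 < θ (2 * m + 2) - θ (2 * k + 1) := by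
        have := hm (2 * k + 1) (2 * m + 2) (by omega) (by omega); linarith
      have hx : (0:ℝ) ≤ θ (2 * k + 1) - θ (2 * k) := by
        have := hm (2 * k) (2 * k + 1) (by omega) (by omega); linarith
      have hub : θ (2 * m + 2) - θ (2 * k + 1) + (θ (2 * k + 1) - θ (2 * k))
          + (θ (2 * m + 2 + 1) - θ (2 * m + 2)) < 2 * Real.pi := by
        have hA := (hb (2 * m + 2 + 1) (by omega)).2
        have hB := (hb (2 * k) (by omega)).1
        linarith
      have hc := hconv (θ (2 * m + 2) - θ (2 * k + 1)) (θ (2 * k + 1) - θ (2 * k))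
        (θ (2 * m + 2 + 1) - θ (2 * m + 2)) hu hx (le_of_lt hyNN) hub
      have ea : θ (2 * m + 2) - θ (2 * k + 1) + (θ (2 * m + 2 + 1) - θ (2 * m + 2))
          = θ (2 * m + 2 + 1) - θ (2 * k + 1) := by ring
      have eb : θ (2 * m + 2) - θ (2 * k + 1) + (θ (2 * k + 1) - θ (2 * k))
          + (θ (2 * m + 2 + 1) - θ (2 * m + 2)) = θ (2 * m + 2 + 1) - θ (2 * k) := by ring
      have ec : θ (2 * m + 2) - θ (2 * k + 1) + (θ (2 * k + 1) - θ (2 * k))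
          = θ (2 * m + 2) - θ (2 * k) := by ring
      rw [ea, eb, ec] at hc
      have s1 : (2 * k) % 2 = (2 * m + 2) % 2 := by omega
      have s2 : ¬ ((2 * k) % 2 = (2 * m + 2 + 1) % 2) := by omega
      have s3 : ¬ ((2 * k + 1) % 2 = (2 * m + 2) % 2) := by omega
      have s4 : (2 * k + 1) % 2 = (2 * m + 2 + 1) % 2 := by omega
      rw [if_pos s1, if_neg s2, if_neg s3, if_pos s4]
      linarith [hc]
    rw [hsgn]
    linarith

theorem stmt_8 (n : ℕ) (hn : 2 ≤ n) (α Rad : ℝ) (hα : 0 < α) (hRad : 0 < Rad)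
    (θ : Fin (2 * n) → ℝ) (hmono : StrictMono θ)
    (hrange : ∀ i, θ i ∈ Set.Ico 0 (2 * Real.pi)) :
    (∑ q ∈ Finset.univ.filter
        (fun q : Fin (2 * n) × Fin (2 * n) => q.1 < q.2 ∧ (q.1 : ℕ) % 2 = (q.2 : ℕ) % 2),
        (2 * Rad * Real.sin ((θ q.2 - θ q.1) / 2)) ^ (-α)) <
    ∑ q ∈ Finset.univ.filter
        (fun q : Fin (2 * n) × Fin (2 * n) => q.1 < q.2 ∧ (q.1 : ℕ) % 2 ≠ (q.2 : ℕ) % 2),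
        (2 * Rad * Real.sin ((θ q.2 - θ q.1) / 2)) ^ (-α) := by
  have hπ := Real.pi_pos
  set f : ℝ → ℝ := fun d => (2 * Rad * Real.sin (d / 2)) ^ (-α) with hf
  set θ' : ℕ → ℝ := fun i => if h : i < 2 * n then θ ⟨i, h⟩ else 0 with hθ'
  have hθ'eq : ∀ (a : Fin (2 * n)), θ a = θ' (a : ℕ) := by
    intro a
    simp [hθ', a.isLt]
  have hpos : ∀ d : ℝ, 0 < d → d < 2 * Real.pi → 0 < f d := by
    intro d h1 h2
    have hsd : 0 < Real.sin (d / 2) :=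
      Real.sin_pos_of_pos_of_lt_pi (by linarith) (by linarith)
    exact Real.rpow_pos_of_pos (by positivity) _
  have hconv : ∀ u x y : ℝ, 0 < u → 0 ≤ x → 0 ≤ y → u + x + y < 2 * Real.pi →
      f (u + y) - f u ≤ f (u + x + y) - f (u + x) :=
    fun u x y h1 h2 h3 h4 => fourpoint α Rad hα hRad h1 h2 h3 h4
  have h1 : ∀ i j, i < j → j < 2 * (n - 1) + 2 → θ' i < θ' j := by
    intro i j hij hj
    have hjN : j < 2 * n := by omega
    have hiN : i < 2 * n := by omega
    simp only [hθ', dif_pos hjN, dif_pos hiN]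
    exact hmono (show (⟨i, hiN⟩ : Fin (2 * n)) < ⟨j, hjN⟩ from hij)
  have h2 : ∀ i, i < 2 * (n - 1) + 2 → 0 ≤ θ' i ∧ θ' i < 2 * Real.pi := by
    intro i hi
    have hiN : i < 2 * n := by omega
    simp only [hθ', dif_pos hiN]
    exact ⟨(hrange _).1, (hrange _).2⟩
  have hmain := main_neg f hpos hconv (n - 1) θ' h1 h2
  rw [show 2 * (n - 1) + 2 = 2 * n by omega] at hmain
  rw [← sub_neg]
  have key : (∑ q ∈ Finset.univ.filter
        (fun q : Fin (2 * n) × Fin (2 * n) => q.1 < q.2 ∧ (q.1 : ℕ) % 2 = (q.2 : ℕ) % 2),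
        (2 * Rad * Real.sin ((θ q.2 - θ q.1) / 2)) ^ (-α)) -
      (∑ q ∈ Finset.univ.filter
        (fun q : Fin (2 * n) × Fin (2 * n) => q.1 < q.2 ∧ (q.1 : ℕ) % 2 ≠ (q.2 : ℕ) % 2),
        (2 * Rad * Real.sin ((θ q.2 - θ q.1) / 2)) ^ (-α)) =
      ∑ j ∈ Finset.range (2 * n), ∑ i ∈ Finset.range j,
        (if i % 2 = j % 2 then (1:ℝ) else -1) * f (θ' j - θ' i) := by
    rw [Finset.sum_filter, Finset.sum_filter, ← Finset.sum_sub_distrib]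
    have step1 : ∀ q : Fin (2 * n) × Fin (2 * n),
        ((if q.1 < q.2 ∧ (q.1 : ℕ) % 2 = (q.2 : ℕ) % 2 then
          (2 * Rad * Real.sin ((θ q.2 - θ q.1) / 2)) ^ (-α) else 0) -
        (if q.1 < q.2 ∧ (q.1 : ℕ) % 2 ≠ (q.2 : ℕ) % 2 then
          (2 * Rad * Real.sin ((θ q.2 - θ q.1) / 2)) ^ (-α) else 0)) =
        ((if (q.1 : ℕ) < (q.2 : ℕ) ∧ (q.1 : ℕ) % 2 = (q.2 : ℕ) % 2 then
          f (θ' (q.2 : ℕ) - θ' (q.1 : ℕ)) else 0) -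
        (if (q.1 : ℕ) < (q.2 : ℕ) ∧ ¬((q.1 : ℕ) % 2 = (q.2 : ℕ) % 2) then
          f (θ' (q.2 : ℕ) - θ' (q.1 : ℕ)) else 0)) := by
      intro q
      rw [← hθ'eq, ← hθ'eq]
      rfl
    rw [Finset.sum_congr rfl (fun q _ => step1 q)]
    rw [Fintype.sum_prod_type_right]
    rw [Fin.sum_univ_eq_sum_range (fun j => ∑ a : Fin (2 * n),
      ((if (a : ℕ) < j ∧ (a : ℕ) % 2 = j % 2 then f (θ' j - θ' (a : ℕ)) else 0) -
        (if (a : ℕ) < j ∧ ¬((a : ℕ) % 2 = j % 2) then f (θ' j - θ' (a : ℕ)) else 0)))]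
    refine Finset.sum_congr rfl ?_
    intro j hj
    have hjN : j < 2 * n := Finset.mem_range.1 hj
    rw [Fin.sum_univ_eq_sum_range (fun i =>
      ((if i < j ∧ i % 2 = j % 2 then f (θ' j - θ' i) else 0) -
        (if i < j ∧ ¬(i % 2 = j % 2) then f (θ' j - θ' i) else 0)))]
    rw [← Finset.sum_subset (Finset.range_subset_range.2 (le_of_lt hjN))
      (by
        intro i hi1 hi2
        have hnij : ¬ i < j := by simp at hi2; omega
        simp [hnij])]
    refine Finset.sum_congr rfl ?_
    intro i hi
    have hij : i < j := Finset.mem_range.1 hi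
    by_cases h : i % 2 = j % 2
    · simp [hij, h]
    · simp [hij, h]
  rw [key]
  exact hmain
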